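/- Let B be a unital C*-algebra and T a positive invertible element of B. Define Φ_T on the order interval [0,1] of B by Φ_T(a) = (1 + T^{-2})^{1/2} (1 − (1 + T a T)^{-1}) (1 + T^{-2})^{1/2}. Then Φ_T maps [0,1] into [0,1], and the map Ψ(a) = T^{-1} ((1 − (1 + T^{-2})^{-1/2} a (1 + T^{-2})^{-1/2})^{-1} − 1) T^{-1} is a two-sided inverse for Φ_T on [0,1]; in particular Φ_T is an order isomorphism of the effect algebra {a ∈ B : 0 ≤ a ≤ 1} onto itself. -/

import Mathlib

section AuxRing
variable {M : Type*} [MonoidWithZero M]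

lemma aux_inv_inv {a : M} (hu : IsUnit a) : Ring.inverse (Ring.inverse a) = a := by
  lift a to Mˣ using hu
  rw [Ring.inverse_unit, Ring.inverse_unit, inv_inv]

end AuxRing

section AuxRing2
variable {R : Type*} [Ring R]

lemma aux_conj_cancel {s : R} (hu : IsUnit s) (x : R) :
    Ring.inverse s * (s * x * s) * Ring.inverse s = x := by
  lift s to Rˣ using hu
  rw [Ring.inverse_unit]
  calc (↑s⁻¹ : R) * (↑s * x * ↑s) * ↑s⁻¹
      = (↑s⁻¹ * ↑s) * x * (↑s * ↑s⁻¹) := by noncomm_ring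
    _ = x := by simp

lemma aux_conj_cancel' {s : R} (hu : IsUnit s) (x : R) :
    s * (Ring.inverse s * x * Ring.inverse s) * s = x := by
  lift s to Rˣ using hu
  rw [Ring.inverse_unit]
  calc (↑s : R) * (↑s⁻¹ * x * ↑s⁻¹) * ↑s
      = (↑s * ↑s⁻¹) * x * (↑s⁻¹ * ↑s) := by noncomm_ring
    _ = x := by simp

lemma aux_commute_inv_self {a : R} (hu : IsUnit a) : Commute a (Ring.inverse a) := by
  unfold Commute SemiconjBy
  rw [Ring.mul_inverse_cancel _ hu, Ring.inverse_mul_cancel _ hu]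

/-- `(1 + (T²)⁻¹)⁻¹ = 1 - (1 + T²)⁻¹`. -/
lemma aux_key {T : R} (hTT : IsUnit (T * T)) (h1 : IsUnit (1 + T * T)) :
    Ring.inverse (1 + Ring.inverse (T * T)) = 1 - Ring.inverse (1 + T * T) := by
  have hcomm : Commute (1 + T * T) (Ring.inverse (T * T)) :=
    (Commute.one_left _).add_left (aux_commute_inv_self hTT)
  have h2 : (1 : R) + Ring.inverse (T * T) = (1 + T * T) * Ring.inverse (T * T) := by
    rw [add_mul, one_mul, Ring.mul_inverse_cancel _ hTT, add_comm]
  rw [h2, Ring.mul_inverse_rev' hcomm, aux_inv_inv hTT]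
  have h3 : (T * T : R) = (1 + T * T) - 1 := (add_sub_cancel_left 1 (T*T)).symm
  nth_rw 1 [h3]
  rw [sub_mul, one_mul, Ring.mul_inverse_cancel _ h1]

lemma aux_isUnit_of_sq {S y : R} (hSS : S * S = y) (hy : IsUnit y) : IsUnit S := by
  have hb : S * (S * Ring.inverse y) = 1 := by
    rw [← mul_assoc, hSS, Ring.mul_inverse_cancel _ hy]
  have hcS : (Ring.inverse y * S) * S = 1 := by
    rw [mul_assoc, hSS, Ring.inverse_mul_cancel _ hy]
  have hbc : S * Ring.inverse y = Ring.inverse y * S := by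
    calc S * Ring.inverse y = (Ring.inverse y * S) * S * (S * Ring.inverse y) := by
          rw [hcS, one_mul]
      _ = Ring.inverse y * S := by rw [mul_assoc, hb, mul_one]
  exact isUnit_iff_exists.mpr ⟨S * Ring.inverse y, hb, by rw [hbc]; exact hcS⟩

end AuxRing2

section AuxCStar
variable {B : Type*} [CStarAlgebra B] [PartialOrder B] [StarOrderedRing B]

lemma aux_inv_nonneg {a : B} (hu : IsUnit a) (ha : 0 ≤ a) : 0 ≤ Ring.inverse a := by
  lift a to Bˣ using hu
  rw [Ring.inverse_unit]
  exact CFC.inv_nonneg_of_nonneg a ha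

lemma aux_inv_le_inv {a b : B} (hau : IsUnit a) (ha : 0 ≤ a) (hab : a ≤ b) :
    Ring.inverse b ≤ Ring.inverse a := by
  have hbu : IsUnit b := CStarAlgebra.isUnit_of_le _ hab (IsStrictlyPositive.iff_of_unital.mpr ⟨ha, hau⟩)
  lift a to Bˣ using hau
  lift b to Bˣ using hbu
  rw [Ring.inverse_unit, Ring.inverse_unit]
  exact CStarAlgebra.inv_le_inv ha hab

lemma aux_inv_le_inv_iff {a b : B} (hau : IsUnit a) (hbu : IsUnit b)
    (ha : 0 ≤ a) (hb : 0 ≤ b) :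
    Ring.inverse a ≤ Ring.inverse b ↔ b ≤ a := by
  lift a to Bˣ using hau
  lift b to Bˣ using hbu
  rw [Ring.inverse_unit, Ring.inverse_unit]
  exact CStarAlgebra.inv_le_inv_iff ha hb

lemma aux_inv_le_one {a : B} (hu : IsUnit a) (ha : (1 : B) ≤ a) : Ring.inverse a ≤ 1 := by
  lift a to Bˣ using hu
  rw [Ring.inverse_unit]
  exact CStarAlgebra.inv_le_one ha

lemma aux_one_le_inv {a : B} (hu : IsUnit a) (h0 : 0 ≤ a) (h1 : a ≤ 1) :
    (1 : B) ≤ Ring.inverse a := by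
  lift a to Bˣ using hu
  rw [Ring.inverse_unit]
  exact (CStarAlgebra.one_le_inv_iff_le_one h0).mpr h1

lemma aux_conj_le_conj_iff {s : B} (hu : IsUnit s) (hs : 0 ≤ s) {a b : B} :
    s * a * s ≤ s * b * s ↔ a ≤ b := by
  constructor
  · intro h
    have h2 := (IsSelfAdjoint.of_nonneg (aux_inv_nonneg hu hs)).conjugate_le_conjugate h
    rwa [aux_conj_cancel hu, aux_conj_cancel hu] at h2
  · exact fun h => (IsSelfAdjoint.of_nonneg hs).conjugate_le_conjugate h

end AuxCStar


/-- `Φ_T(a) = (1 + T⁻²)^{1/2} (1 − (1 + T a T)⁻¹) (1 + T⁻²)^{1/2}`. -/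
noncomputable def PhiT {B : Type*} [CStarAlgebra B] [PartialOrder B] [StarOrderedRing B]
    (T : B) (a : B) : B :=
  CFC.sqrt (1 + Ring.inverse (T * T)) * (1 - Ring.inverse (1 + T * a * T)) *
    CFC.sqrt (1 + Ring.inverse (T * T))

/-- `Ψ(a) = T⁻¹ ((1 − (1 + T⁻²)^{-1/2} a (1 + T⁻²)^{-1/2})⁻¹ − 1) T⁻¹`. -/
noncomputable def PsiT {B : Type*} [CStarAlgebra B] [PartialOrder B] [StarOrderedRing B]
    (T : B) (a : B) : B :=
  Ring.inverse T *
    (Ring.inverse (1 - Ring.inverse (CFC.sqrt (1 + Ring.inverse (T * T))) * a *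
        Ring.inverse (CFC.sqrt (1 + Ring.inverse (T * T)))) - 1) *
    Ring.inverse T

/-- for a positive invertible `T`, `Φ_T` maps `[0,1]` into `[0,1]`,
`Ψ` is a two-sided inverse of `Φ_T` on `[0,1]`, and `Φ_T` is an order isomorphism of
the effect algebra `{a : 0 ≤ a ≤ 1}` onto itself. -/
theorem stmt4 {B : Type*} [CStarAlgebra B] [PartialOrder B] [StarOrderedRing B]
    (T : B) (hT : 0 ≤ T) (hTu : IsUnit T) :
    (∀ a : B, 0 ≤ a → a ≤ 1 → 0 ≤ PhiT T a ∧ PhiT T a ≤ 1) ∧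
    (∀ a : B, 0 ≤ a → a ≤ 1 → PsiT T (PhiT T a) = a) ∧
    (∀ a : B, 0 ≤ a → a ≤ 1 → 0 ≤ PsiT T a ∧ PsiT T a ≤ 1 ∧ PhiT T (PsiT T a) = a) ∧
    (∀ a b : B, 0 ≤ a → a ≤ 1 → 0 ≤ b → b ≤ 1 → (a ≤ b ↔ PhiT T a ≤ PhiT T b)) := by
  have hTsa : IsSelfAdjoint T := .of_nonneg hT
  have hTT : (0:B) ≤ T * T := by simpa [hTsa.star_eq] using star_mul_self_nonneg T
  have hTTu : IsUnit (T * T) := hTu.mul hTu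
  have hiT0 : (0:B) ≤ Ring.inverse T := aux_inv_nonneg hTu hT
  have hw0 : (0:B) ≤ Ring.inverse (T * T) := aux_inv_nonneg hTTu hTT
  have hy1 : (1:B) ≤ 1 + Ring.inverse (T * T) := le_add_of_nonneg_right hw0
  have hy0 : (0:B) ≤ 1 + Ring.inverse (T * T) := zero_le_one.trans hy1
  have hyu : IsUnit ((1:B) + Ring.inverse (T * T)) :=
    CStarAlgebra.isUnit_of_le _ hy1 (IsStrictlyPositive.iff_of_unital.mpr ⟨zero_le_one, isUnit_one⟩)
  set S : B := CFC.sqrt (1 + Ring.inverse (T * T)) with hS_def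
  have hS0 : (0:B) ≤ S := CFC.sqrt_nonneg _
  have hSS : S * S = 1 + Ring.inverse (T * T) := CFC.sqrt_mul_sqrt_self _ hy0
  have hSu : IsUnit S := aux_isUnit_of_sq hSS hyu
  have hIS0 : (0:B) ≤ Ring.inverse S := aux_inv_nonneg hSu hS0
  have hISIS : Ring.inverse S * Ring.inverse S = Ring.inverse (1 + Ring.inverse (T * T)) := by
    rw [← hSS, Ring.mul_inverse_rev' (Commute.refl S)]
  have h1TT : (1:B) ≤ 1 + T * T := le_add_of_nonneg_right hTT
  have h1TT0 : (0:B) ≤ 1 + T * T := zero_le_one.trans h1TT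
  have h1TTu : IsUnit ((1:B) + T * T) :=
    CStarAlgebra.isUnit_of_le _ h1TT (IsStrictlyPositive.iff_of_unital.mpr ⟨zero_le_one, isUnit_one⟩)
  have hITT0 : (0:B) ≤ Ring.inverse (1 + T * T) := aux_inv_nonneg h1TTu h1TT0
  have hkey : Ring.inverse ((1:B) + Ring.inverse (T * T)) = 1 - Ring.inverse (1 + T * T) :=
    aux_key hTTu h1TTu
  have hq0 : ∀ a : B, 0 ≤ a → (0:B) ≤ T * a * T := fun a ha => by
    simpa [hTsa.star_eq] using star_left_conjugate_nonneg ha T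
  have hz1 : ∀ a : B, 0 ≤ a → (1:B) ≤ 1 + T * a * T := fun a ha =>
    le_add_of_nonneg_right (hq0 a ha)
  have hzu : ∀ a : B, 0 ≤ a → IsUnit ((1:B) + T * a * T) := fun a ha =>
    CStarAlgebra.isUnit_of_le _ (hz1 a ha) (IsStrictlyPositive.iff_of_unital.mpr ⟨zero_le_one, isUnit_one⟩)
  refine ⟨?_, ?_, ?_, ?_⟩
  · -- Φ maps into [0,1]
    intro a ha ha1
    have hc0 : (0:B) ≤ 1 - Ring.inverse (1 + T * a * T) :=
      sub_nonneg.mpr (aux_inv_le_one (hzu a ha) (hz1 a ha))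
    constructor
    · simp only [PhiT]; rw [← hS_def]
      exact conjugate_nonneg_of_nonneg hc0 hS0
    · have hTaT : T * a * T ≤ T * T := by
        have h := (hTsa.conjugate_le_conjugate ha1 : T * a * T ≤ T * 1 * T)
        rwa [mul_one] at h
      have h1 : (1:B) + T * a * T ≤ 1 + T * T := add_le_add_right hTaT 1
      have h2 : Ring.inverse ((1:B) + T * T) ≤ Ring.inverse (1 + T * a * T) :=
        aux_inv_le_inv (hzu a ha) (zero_le_one.trans (hz1 a ha)) h1
      have hc_le : (1:B) - Ring.inverse (1 + T * a * T) ≤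
          Ring.inverse (1 + Ring.inverse (T * T)) := by
        rw [hkey]; exact sub_le_sub_left h2 1
      simp only [PhiT]; rw [← hS_def]
      calc S * (1 - Ring.inverse (1 + T * a * T)) * S
          ≤ S * Ring.inverse (1 + Ring.inverse (T * T)) * S :=
            (IsSelfAdjoint.of_nonneg hS0).conjugate_le_conjugate hc_le
        _ = 1 := by
            rw [← hISIS, ← mul_assoc, Ring.mul_inverse_cancel _ hSu, one_mul,
              Ring.inverse_mul_cancel _ hSu]
  · -- Ψ ∘ Φ = id
    intro a ha _
    simp only [PhiT, PsiT]; rw [← hS_def]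
    rw [aux_conj_cancel hSu, sub_sub_cancel, aux_inv_inv (hzu a ha), add_sub_cancel_left]
    exact aux_conj_cancel hTu a
  · -- Ψ bounds and Φ ∘ Ψ = id
    intro a ha ha1
    have hd0 : (0:B) ≤ Ring.inverse S * a * Ring.inverse S :=
      conjugate_nonneg_of_nonneg ha hIS0
    have hd_le : Ring.inverse S * a * Ring.inverse S ≤
        Ring.inverse (1 + Ring.inverse (T * T)) := by
      have h := (IsSelfAdjoint.of_nonneg hIS0).conjugate_le_conjugate ha1
      rw [mul_one] at h
      rw [← hISIS]; exact h
    have hm_ge : Ring.inverse ((1:B) + T * T) ≤ 1 - Ring.inverse S * a * Ring.inverse S := by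
      have h := sub_le_sub_left hd_le 1
      rwa [hkey, sub_sub_cancel] at h
    have hm0 : (0:B) ≤ 1 - Ring.inverse S * a * Ring.inverse S := hITT0.trans hm_ge
    have hmu : IsUnit ((1:B) - Ring.inverse S * a * Ring.inverse S) :=
      CStarAlgebra.isUnit_of_le _ hm_ge (IsStrictlyPositive.iff_of_unital.mpr ⟨hITT0, h1TTu.ringInverse⟩)
    have hm1 : (1:B) - Ring.inverse S * a * Ring.inverse S ≤ 1 := sub_le_self 1 hd0
    have him1 : (1:B) ≤ Ring.inverse (1 - Ring.inverse S * a * Ring.inverse S) :=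
      aux_one_le_inv hmu hm0 hm1
    refine ⟨?_, ?_, ?_⟩
    · simp only [PsiT]; rw [← hS_def]
      exact conjugate_nonneg_of_nonneg (sub_nonneg.mpr him1) hiT0
    · have him_le : Ring.inverse ((1:B) - Ring.inverse S * a * Ring.inverse S) ≤ 1 + T * T := by
        have h := aux_inv_le_inv h1TTu.ringInverse hITT0 hm_ge
        rwa [aux_inv_inv h1TTu] at h
      have h3 : Ring.inverse ((1:B) - Ring.inverse S * a * Ring.inverse S) - 1 ≤ T * T := by
        have h := sub_le_sub_right him_le 1
        rwa [add_sub_cancel_left] at h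
      simp only [PsiT]; rw [← hS_def]
      calc Ring.inverse T * (Ring.inverse (1 - Ring.inverse S * a * Ring.inverse S) - 1) *
            Ring.inverse T
          ≤ Ring.inverse T * (T * T) * Ring.inverse T :=
            (IsSelfAdjoint.of_nonneg hiT0).conjugate_le_conjugate h3
        _ = 1 := by
            rw [← mul_assoc, Ring.inverse_mul_cancel _ hTu, one_mul,
              Ring.mul_inverse_cancel _ hTu]
    · simp only [PhiT, PsiT]; rw [← hS_def]
      rw [aux_conj_cancel' hTu]
      rw [show (1:B) + (Ring.inverse (1 - Ring.inverse S * a * Ring.inverse S) - 1) =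
          Ring.inverse (1 - Ring.inverse S * a * Ring.inverse S) from by abel]
      rw [aux_inv_inv hmu, sub_sub_cancel]
      exact aux_conj_cancel' hSu a
  · -- order isomorphism
    intro a b ha ha1 hb hb1
    simp only [PhiT]; rw [← hS_def]
    calc a ≤ b ↔ T * a * T ≤ T * b * T := (aux_conj_le_conj_iff hTu hT).symm
      _ ↔ (1:B) + T * a * T ≤ 1 + T * b * T := (add_le_add_iff_left 1).symm
      _ ↔ Ring.inverse ((1:B) + T * b * T) ≤ Ring.inverse (1 + T * a * T) :=
          (aux_inv_le_inv_iff (hzu b hb) (hzu a ha) (zero_le_one.trans (hz1 b hb))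
            (zero_le_one.trans (hz1 a ha))).symm
      _ ↔ (1:B) - Ring.inverse (1 + T * a * T) ≤ 1 - Ring.inverse (1 + T * b * T) :=
          (sub_le_sub_iff_left 1).symm
      _ ↔ S * (1 - Ring.inverse (1 + T * a * T)) * S ≤
            S * (1 - Ring.inverse (1 + T * b * T)) * S :=
          (aux_conj_le_conj_iff hSu hS0).symm
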